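/- Let M be a matroid on a finite ground set, and let I and J be independent sets of M such that for every element e of I, the set J ∪ {e} is dependent (hence e ∉ J and the fundamental circuit C_J(e), i.e. the unique circuit contained in J ∪ {e}, exists). Then for every subset I' ⊆ I, the set ⋃_{e ∈ I'} (C_J(e) \ {e}) ⊆ J has at least |I'| elements. -/

import Mathlib

/-- A circuit of a matroid: an inclusion-wise minimal dependent set. -/
def Matroid.IsCircuit' {α : Type*} (M : Matroid α) (C : Set α) : Prop :=
  M.Dep C ∧ ∀ D ⊂ C, ¬ M.Dep D

/-- Let `M` be a matroid on a finite ground set, `I, J` independent sets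
such that `J + e` is dependent for every `e ∈ I`, and let `C e` be the fundamental circuit
of `e` in `J` (the unique circuit contained in `J ∪ {e}`). Then for every `I' ⊆ I`, the set
`⋃ e ∈ I', C e \ {e}` has at least `|I'|` elements. -/
theorem fundamental_circuits_union_lower_bound {α : Type*} (M : Matroid α)
    (hfin : M.E.Finite) (I J : Set α) (hI : M.Indep I) (hJ : M.Indep J)
    (hdep : ∀ e ∈ I, M.Dep (insert e J))
    (C : α → Set α)
    (hC : ∀ e ∈ I, M.IsCircuit' (C e) ∧ C e ⊆ insert e J) :
    ∀ I' ⊆ I, I'.ncard ≤ (⋃ e ∈ I', (C e \ {e})).ncard := by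
  intro I' hI'I
  set U : Set α := ⋃ e ∈ I', (C e \ {e}) with hUdef
  have hUJ : U ⊆ J := by
    refine Set.iUnion₂_subset fun e he => ?_
    intro x hx
    have hxC : x ∈ insert e J := (hC e (hI'I he)).2 hx.1
    rcases hxC with h | h
    · exact absurd h hx.2
    · exact h
  have hU : M.Indep U := hJ.subset hUJ
  have hI'indep : M.Indep I' := hI.subset hI'I
  -- every e ∈ I' lies in the closure of U
  have hcl : ∀ e ∈ I', e ∈ M.closure U := by
    intro e he
    have heI : e ∈ I := hI'I he
    have heJ : e ∉ J := by
      intro heJ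
      refine (hdep e heI).not_indep ?_
      rwa [Set.insert_eq_self.mpr heJ]
    have heC : e ∈ C e := by
      by_contra h
      have hsub : C e ⊆ J := by
        intro x hx
        rcases (hC e heI).2 hx with h' | h'
        · exact absurd (h' ▸ hx) h
        · exact h'
      exact ((hC e heI).1.1).not_indep (hJ.subset hsub)
    have hCe : M.Indep (C e \ {e}) := by
      refine hJ.subset ?_
      intro x hx
      rcases (hC e heI).2 hx.1 with h' | h'
      · exact absurd h' hx.2
      · exact h'
    have hins : insert e (C e \ {e}) = C e := by
      rw [Set.insert_diff_singleton, Set.insert_eq_self.mpr heC]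
    have hdep' : M.Dep (insert e (C e \ {e})) := by rw [hins]; exact (hC e heI).1.1
    have he_cl : e ∈ M.closure (C e \ {e}) := hCe.mem_closure_iff.mpr (Or.inl hdep')
    exact M.closure_subset_closure (Set.subset_iUnion₂ (s := fun e _ => C e \ {e}) e he) he_cl
  -- cardinality argument via augmentation
  have hUfin : U.Finite := hfin.subset (hUJ.trans hJ.subset_ground)
  have hI'fin : I'.Finite := hfin.subset (hI'indep.subset_ground)
  by_contra hlt
  push_neg at hlt
  have hencard : U.encard < I'.encard := by
    rw [← Set.Finite.cast_ncard_eq hUfin, ← Set.Finite.cast_ncard_eq hI'fin]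
    exact_mod_cast hlt
  obtain ⟨x, hxmem, hxind⟩ := hU.augment hI'indep hencard
  have hxcl : x ∈ M.closure U := hcl x hxmem.1
  have : M.Dep (insert x U) := (hU.insert_dep_iff).mpr ⟨hxcl, hxmem.2⟩
  exact this.not_indep hxind
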